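/- arXiv:1406.1049 — 7 statements merged into one kernel-verified Lean document; each statement's English description precedes it below -/
import Mathlib

section
/- For every finite abelian group G acting on a finite set X of cardinality n, there exists a basis X̂ of ℂ^X consisting of G-linear functions such that X̂ is closed under complex conjugation and ⟨λ, μ⟩ = n·δ_{λμ} for all λ, μ ∈ X̂ (i.e., X̂ is an n-normal orthogonal basis). -/
set_option linter.unusedSectionVars false

open Finset MulAction

namespace Stmt8Aux

noncomputable section
open scoped Classical


/-- Norm-one of character values. -/
theorem char_norm {Q : Type*} [CommGroup Q] [Fintype Q] (χ : Q →* ℂˣ) (q : Q) :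
    ‖(χ q : ℂ)‖ = 1 := by
  refine Complex.norm_eq_one_of_pow_eq_one (n := Fintype.card Q) ?_ Fintype.card_ne_zero
  rw [← Units.val_pow_eq_pow_val, ← map_pow, pow_card_eq_one, map_one, Units.val_one]

theorem char_conj {Q : Type*} [CommGroup Q] [Fintype Q] (χ : Q →* ℂˣ) (q : Q) :
    (starRingEnd ℂ) (χ q : ℂ) = ((χ⁻¹ q : ℂˣ) : ℂ) := by
  rw [← Complex.inv_eq_conj (char_norm χ q)]
  simp

theorem char_sum {Q : Type*} [CommGroup Q] [Fintype Q] (ν : Q →* ℂˣ) :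
    ∑ q : Q, (ν q : ℂ) = if ν = 1 then (Fintype.card Q : ℂ) else 0 := by
  split_ifs with h
  · subst h; simp
  · obtain ⟨q₀, hq₀⟩ : ∃ q, ν q ≠ 1 := by
      by_contra hc; push_neg at hc; exact h (MonoidHom.ext fun q => hc q)
    have key : (ν q₀ : ℂ) * ∑ q : Q, (ν q : ℂ) = ∑ q : Q, (ν q : ℂ) := by
      rw [Finset.mul_sum]
      exact Fintype.sum_equiv (Equiv.mulLeft q₀) _ _ fun q => by
        simp [Equiv.coe_mulLeft, map_mul]
    have h0 : ((ν q₀ : ℂ) - 1) * ∑ q : Q, (ν q : ℂ) = 0 := by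
      rw [sub_mul, one_mul, key, sub_self]
    rcases mul_eq_zero.mp h0 with h1 | h1
    · exact absurd (Units.ext (by simpa using sub_eq_zero.mp h1)) hq₀
    · exact h1

theorem dual_equiv (Q : Type*) [CommGroup Q] [Finite Q] : Nonempty ((Q →* ℂˣ) ≃* Q) := by
  haveI : NeZero (Monoid.exponent Q) := ⟨Monoid.exponent_ne_zero_of_finite⟩
  exact CommGroup.monoidHom_mulEquiv_of_hasEnoughRootsOfUnity Q ℂ


variable {G X : Type*} [CommGroup G] [Fintype G] [Fintype X] [MulAction G X]

/-- canonical coset for a point of an orbit -/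
def qg {x b : X} (h : x ∈ orbit G b) : G ⧸ stabilizer G b :=
  QuotientGroup.mk (mem_orbit_iff.mp h).choose

theorem qg_eq {x b : X} (h : x ∈ orbit G b) {g : G} (hg : g • b = x) :
    qg h = QuotientGroup.mk g := by
  have hs : (mem_orbit_iff.mp h).choose • b = x := (mem_orbit_iff.mp h).choose_spec
  refine (QuotientGroup.eq).mpr ?_
  rw [mem_stabilizer_iff, mul_smul, hg]
  exact inv_smul_eq_iff.mpr hs.symm

variable (G X) in
abbrev Idx := Σ c : Quotient (orbitRel G X), (G ⧸ stabilizer G c.out) →* ℂˣ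

def sc (c : Quotient (orbitRel G X)) : ℝ :=
  Real.sqrt (Fintype.card X / Nat.card (G ⧸ stabilizer G c.out))

def lamF (i : Idx G X) : X → ℂ := fun x =>
  if h : x ∈ orbit G i.1.out then (sc i.1 : ℂ) * (i.2 (qg h) : ℂ) else 0

theorem orbit_out_eq {c c' : Quotient (orbitRel G X)} {x : X}
    (h : x ∈ orbit G c.out) (h' : x ∈ orbit G c'.out) : c = c' := by
  rw [← c.out_eq', ← c'.out_eq']
  refine Quotient.sound' ?_
  rw [orbitRel_apply]
  have e1 : orbit G x = orbit G (Quotient.out c) := orbit_eq_iff.mpr h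
  have e2 : orbit G x = orbit G (Quotient.out c') := orbit_eq_iff.mpr h'
  rw [← e2, e1]
  exact mem_orbit_self _

theorem smul_mem_orbit_iff {b x : X} (α : G) : α • x ∈ orbit G b ↔ x ∈ orbit G b := by
  constructor
  · rintro ⟨g, hg⟩
    have hg' : g • b = α • x := hg
    exact ⟨α⁻¹ * g, by show (α⁻¹ * g) • b = x; rw [mul_smul, hg']; exact inv_smul_smul _ _⟩
  · rintro ⟨g, hg⟩
    have hg' : g • b = x := hg
    exact ⟨α * g, by show (α * g) • b = α • x; rw [mul_smul, hg']⟩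


theorem lamF_smul_out (c : Quotient (orbitRel G X)) (χ : (G ⧸ stabilizer G c.out) →* ℂˣ)
    (g : G) :
    lamF ⟨c, χ⟩ (g • c.out) = (sc c : ℂ) * (χ (QuotientGroup.mk g) : ℂ) := by
  have h : g • c.out ∈ orbit G (Sigma.mk (β := fun c : Quotient (orbitRel G X) =>
      (G ⧸ stabilizer G c.out) →* ℂˣ) c χ).1.out := mem_orbit _ g
  rw [lamF, dif_pos h, qg_eq h rfl]

theorem lamF_zero {i : Idx G X} {x : X} (h : x ∉ orbit G i.1.out) : lamF i x = 0 :=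
  dif_neg h

theorem sc_pos (c : Quotient (orbitRel G X)) : 0 < sc c := by
  have : Nonempty X := ⟨c.out⟩
  refine Real.sqrt_pos.mpr (div_pos ?_ ?_)
  · exact_mod_cast Fintype.card_pos
  · exact_mod_cast Nat.card_pos

theorem sc_mul_self (c : Quotient (orbitRel G X)) :
    sc c * sc c = (Fintype.card X : ℝ) / (Nat.card (G ⧸ stabilizer G c.out) : ℝ) := by
  refine Real.mul_self_sqrt (div_nonneg (by positivity) (by positivity))

theorem sum_reindex (c : Quotient (orbitRel G X)) (f : X → ℂ)
    (hf : ∀ x, x ∉ orbit G c.out → f x = 0) :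
    ∑ x : X, f x
      = ∑ q : G ⧸ stabilizer G c.out,
          f ((orbitEquivQuotientStabilizer G c.out).symm q : X) := by
  classical
  have h1 : ∑ x : X, f x = ∑ x ∈ (orbit G c.out).toFinset, f x := by
    refine (Finset.sum_subset (Finset.subset_univ _) fun x _ hx => ?_).symm
    exact hf x (by simpa using hx)
  have h2 : ∑ x ∈ (orbit G c.out).toFinset, f x = ∑ x : orbit G c.out, f x :=
    Finset.sum_subtype _ (fun x => Set.mem_toFinset) f
  rw [h1, h2, ← Equiv.sum_comp (orbitEquivQuotientStabilizer G c.out).symm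
    (fun x : orbit G c.out => f (x : X))]

theorem pairing (i j : Idx G X) :
    ∑ x : X, lamF i x * (starRingEnd ℂ) (lamF j x)
      = if i = j then (Fintype.card X : ℂ) else 0 := by
  obtain ⟨c, χ⟩ := i
  obtain ⟨c', μ⟩ := j
  by_cases hc : c = c'
  · subst hc
    have hvan : ∀ x, x ∉ orbit G c.out →
        lamF ⟨c, χ⟩ x * (starRingEnd ℂ) (lamF ⟨c, μ⟩ x) = 0 := by
      intro x hx
      rw [lamF_zero (i := ⟨c, χ⟩) hx, zero_mul]
    rw [sum_reindex c _ hvan]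
    have hterm : ∀ q : G ⧸ stabilizer G c.out,
        lamF ⟨c, χ⟩ ((orbitEquivQuotientStabilizer G c.out).symm q : X) *
          (starRingEnd ℂ) (lamF ⟨c, μ⟩ ((orbitEquivQuotientStabilizer G c.out).symm q : X))
        = ((sc c * sc c : ℝ) : ℂ) * ((χ * μ⁻¹) q : ℂ) := by
      intro q
      refine QuotientGroup.induction_on q fun g => ?_
      rw [orbitEquivQuotientStabilizer_symm_apply, lamF_smul_out, lamF_smul_out,
        map_mul, Complex.conj_ofReal, char_conj, MonoidHom.mul_apply, Units.val_mul,
        Complex.ofReal_mul]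
      ring
    rw [Finset.sum_congr rfl fun q _ => hterm q, ← Finset.mul_sum, char_sum]
    have hiff : ((⟨c, χ⟩ : Idx G X) = ⟨c, μ⟩) ↔ χ = μ := by simp
    by_cases hμ : χ = μ
    · subst hμ
      have h1 : χ * χ⁻¹ = 1 := mul_inv_cancel χ
      rw [h1, if_pos rfl, if_pos rfl, sc_mul_self, ← Nat.card_eq_fintype_card]
      have : Nonempty X := ⟨c.out⟩
      have hm : (Nat.card (G ⧸ stabilizer G c.out) : ℝ) ≠ 0 := by
        exact_mod_cast Nat.card_pos.ne'
      rw [Complex.ofReal_div]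
      push_cast
      field_simp
      exact_mod_cast Fintype.card_eq_nat_card
    · rw [if_neg (mul_inv_eq_one.not.mpr hμ), if_neg (hiff.not.mpr hμ), mul_zero]
  · rw [if_neg fun h => hc (congrArg Sigma.fst h)]
    refine Finset.sum_eq_zero fun x _ => ?_
    by_cases hx : x ∈ orbit G c.out
    · have hx' : x ∉ orbit G c'.out := fun hm => hc (orbit_out_eq hx hm)
      rw [lamF_zero (i := ⟨c', μ⟩) hx', map_zero, mul_zero]
    · rw [lamF_zero (i := ⟨c, χ⟩) hx, zero_mul]

theorem lamF_inj : Function.Injective (lamF (G := G) (X := X)) := by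
  rintro ⟨c, χ⟩ ⟨c', μ⟩ h
  have e1 : ∀ (ν : (G ⧸ stabilizer G c.out) →* ℂˣ), lamF ⟨c, ν⟩ c.out = (sc c : ℂ) := by
    intro ν
    have h1 := lamF_smul_out c ν 1
    rw [one_smul] at h1
    rw [h1, QuotientGroup.mk_one, map_one, Units.val_one, mul_one]
  have hc : c = c' := by
    by_contra hcc
    have hout : (c.out : X) ∉ orbit G c'.out :=
      fun hmem => hcc (orbit_out_eq (mem_orbit_self _) hmem)
    have h0 := congrFun h c.out
    rw [e1 χ, lamF_zero (i := ⟨c', μ⟩) hout] at h0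
    exact (Complex.ofReal_ne_zero.mpr (sc_pos c).ne') h0
  subst hc
  have hχ : χ = μ := by
    refine MonoidHom.ext fun q => ?_
    refine QuotientGroup.induction_on q fun g => ?_
    have h0 := congrFun h (g • c.out)
    rw [lamF_smul_out, lamF_smul_out] at h0
    exact Units.ext (mul_left_cancel₀ (Complex.ofReal_ne_zero.mpr (sc_pos c).ne') h0)
  rw [hχ]

theorem lamF_conj (i : Idx G X) :
    (fun x => (starRingEnd ℂ) (lamF i x)) = lamF ⟨i.1, i.2⁻¹⟩ := by
  obtain ⟨c, χ⟩ := i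
  funext x
  by_cases hx : x ∈ orbit G c.out
  · obtain ⟨g, hg⟩ := mem_orbit_iff.mp hx
    rw [← hg, lamF_smul_out, lamF_smul_out, map_mul, Complex.conj_ofReal, char_conj]
  · rw [lamF_zero (i := ⟨c, χ⟩) hx, lamF_zero (i := ⟨c, χ⁻¹⟩) hx, map_zero]

theorem lamF_linear (i : Idx G X) (α : G) (x : X) :
    lamF i (α • x) = ((i.2 (QuotientGroup.mk α) : ℂ)) * lamF i x := by
  obtain ⟨c, χ⟩ := i
  by_cases hx : x ∈ orbit G c.out
  · obtain ⟨g, hg⟩ := mem_orbit_iff.mp hx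
    have hg' : (α * g) • c.out = α • x := by rw [mul_smul, hg]
    rw [← hg', ← hg, lamF_smul_out, lamF_smul_out, QuotientGroup.mk_mul, map_mul,
      Units.val_mul]
    ring
  · have hax : α • x ∉ orbit G c.out := fun hm => hx ((smul_mem_orbit_iff α).mp hm)
    rw [lamF_zero (i := ⟨c, χ⟩) hax, lamF_zero (i := ⟨c, χ⟩) hx, mul_zero]

def dualOrbitEquiv (c : Quotient (orbitRel G X)) :
    ((G ⧸ stabilizer G c.out) →* ℂˣ) ≃ orbit G c.out :=
  ((dual_equiv _).some.toEquiv).trans (orbitEquivQuotientStabilizer G c.out).symm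

def idxEquiv : Idx G X ≃ X :=
  (Equiv.sigmaCongrRight dualOrbitEquiv).trans (selfEquivSigmaOrbits G X).symm

theorem card_idx : Nat.card (Idx G X) = Fintype.card X := by
  rw [Nat.card_congr (idxEquiv (G := G) (X := X)), Nat.card_eq_fintype_card]

end
end Stmt8Aux

/-- Existence of a G-dual X̂ of X: an n-normal orthogonal spanning set of
cardinality n = |X| consisting of G-linear functions, closed under conjugation. -/
theorem stmt8 {G X : Type*} [CommGroup G] [Fintype G] [Fintype X] [MulAction G X] :
    ∃ Λ : Finset (X → ℂ),
      Λ.card = Fintype.card X ∧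
      (∀ lam ∈ Λ, ∃ ψ : G →* ℂ, ∀ (α : G) (x : X), lam (α • x) = ψ α * lam x) ∧
      (∀ lam ∈ Λ, (fun x => (starRingEnd ℂ) (lam x)) ∈ Λ) ∧
      (∀ lam ∈ Λ, ∀ mu ∈ Λ,
        ∑ x : X, lam x * (starRingEnd ℂ) (mu x)
          = if lam = mu then (Fintype.card X : ℂ) else 0) ∧
      Submodule.span ℂ (Λ : Set (X → ℂ)) = ⊤ := by
  classical
  haveI : Finite (Stmt8Aux.Idx G X) := Finite.of_equiv X (Stmt8Aux.idxEquiv).symm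
  letI : Fintype (Stmt8Aux.Idx G X) := Fintype.ofFinite _
  set Λ : Finset (X → ℂ) := Finset.image (Stmt8Aux.lamF (G := G) (X := X)) Finset.univ with hΛ
  have hmem : ∀ lam ∈ Λ, ∃ i : Stmt8Aux.Idx G X, Stmt8Aux.lamF i = lam := by
    intro lam h
    rw [hΛ] at h
    obtain ⟨i, -, hi⟩ := Finset.mem_image.mp h
    exact ⟨i, hi⟩
  have horth : ∀ lam ∈ Λ, ∀ mu ∈ Λ,
      ∑ x : X, lam x * (starRingEnd ℂ) (mu x)
        = if lam = mu then (Fintype.card X : ℂ) else 0 := by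
    intro lam hl mu hm
    obtain ⟨i, rfl⟩ := hmem lam hl
    obtain ⟨j, rfl⟩ := hmem mu hm
    rw [Stmt8Aux.pairing]
    by_cases h : i = j
    · subst h; rw [if_pos rfl, if_pos rfl]
    · rw [if_neg h, if_neg fun hh => h (Stmt8Aux.lamF_inj hh)]
  have hcard : Λ.card = Fintype.card X := by
    rw [hΛ, Finset.card_image_of_injective _ Stmt8Aux.lamF_inj, Finset.card_univ,
      ← Nat.card_eq_fintype_card, Stmt8Aux.card_idx]
  refine ⟨Λ, hcard, ?_, ?_, horth, ?_⟩
  · intro lam hl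
    obtain ⟨i, rfl⟩ := hmem lam hl
    exact ⟨(Units.coeHom ℂ).comp (i.2.comp (QuotientGroup.mk' (MulAction.stabilizer G i.1.out))),
      fun α x => Stmt8Aux.lamF_linear i α x⟩
  · intro lam hl
    obtain ⟨i, rfl⟩ := hmem lam hl
    rw [Stmt8Aux.lamF_conj, hΛ]
    exact Finset.mem_image_of_mem _ (Finset.mem_univ _)
  · by_cases hX : IsEmpty X
    · haveI : Subsingleton (X → ℂ) := ⟨fun f g => funext fun x => (hX.false x).elim⟩
      exact Subsingleton.elim _ _
    · rw [not_isEmpty_iff] at hX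
      have hn : (Fintype.card X : ℂ) ≠ 0 := Nat.cast_ne_zero.mpr Fintype.card_ne_zero
      have hli : LinearIndependent ℂ (fun v : ↥Λ => (v : X → ℂ)) := by
        rw [Fintype.linearIndependent_iff]
        intro g hg i
        have key : (0 : ℂ) = g i * (Fintype.card X : ℂ) := by
          calc (0 : ℂ)
              = ∑ x : X, (0 : X → ℂ) x * (starRingEnd ℂ) ((i : X → ℂ) x) := by simp
            _ = ∑ x : X, (∑ j : ↥Λ, g j • ((j : X → ℂ))) x
                  * (starRingEnd ℂ) ((i : X → ℂ) x) := by rw [← hg]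
            _ = ∑ j : ↥Λ, ∑ x : X,
                  g j * ((j : X → ℂ) x * (starRingEnd ℂ) ((i : X → ℂ) x)) := by
                rw [← Finset.sum_comm]
                refine Finset.sum_congr rfl fun x _ => ?_
                rw [Finset.sum_apply, Finset.sum_mul]
                exact Finset.sum_congr rfl fun j _ => by
                  rw [Pi.smul_apply, smul_eq_mul, mul_assoc]
            _ = ∑ j : ↥Λ, if j = i then g j * (Fintype.card X : ℂ) else 0 := by
                refine Finset.sum_congr rfl fun j _ => ?_
                rw [← Finset.mul_sum, horth (j : X → ℂ) j.2 (i : X → ℂ) i.2]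
                by_cases h : j = i
                · rw [if_pos (by rw [h]), if_pos h]
                · rw [if_neg fun hh => h (Subtype.ext hh), if_neg h, mul_zero]
            _ = g i * (Fintype.card X : ℂ) := by
                rw [Finset.sum_ite_eq' Finset.univ i fun j => g j * (Fintype.card X : ℂ),
                  if_pos (Finset.mem_univ i)]
        exact (mul_eq_zero.mp key.symm).resolve_right hn
      have hcard2 : Fintype.card ↥Λ = Module.finrank ℂ (X → ℂ) := by
        rw [Fintype.card_coe, hcard, Module.finrank_pi]
      have hsp := hli.span_eq_top_of_card_eq_finrank' hcard2
      rw [Subtype.range_coe_subtype, Finset.setOf_mem] at hsp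
      exact hsp
end

section
/- For σ : G → ℂ, f : X → ℂ, and λ ∈ X̂ a ψ_λ-linear basis element, the Fourier transform of the convolution satisfies (σ∗f)^(λ) = σ̂(ψ_λ)·f̂(λ), where σ̂(ψ) = Σ_{α∈G} σ(α)ψ(α) and f̂(λ) = Σ_{x∈X} f(x)λ(x). -/
open Finset

/-- Fourier transform of a convolution: (σ∗f)^(λ) = σ̂(ψ_λ)·f̂(λ),
for λ a ψ-linear function. -/
theorem stmt11 {G X : Type*} [CommGroup G] [Fintype G] [Fintype X] [MulAction G X]
    (σ : G → ℂ) (f : X → ℂ) (lam : X → ℂ) (ψ : G →* ℂ)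
    (hlin : ∀ (α : G) (x : X), lam (α • x) = ψ α * lam x) :
    ∑ x : X, (∑ α : G, σ α * f (α⁻¹ • x)) * lam x
      = (∑ α : G, σ α * ψ α) * ∑ x : X, f x * lam x := by
  simp_rw [Finset.sum_mul]
  rw [Finset.sum_comm]
  simp_rw [Finset.mul_sum]
  refine Finset.sum_congr rfl fun α _ => ?_
  refine Fintype.sum_equiv (MulAction.toPerm (α := G) (β := X) α).symm _ _ fun x => ?_
  have h := hlin α (α⁻¹ • x)
  rw [smul_inv_smul] at h
  simp only [MulAction.toPerm, Equiv.coe_fn_symm_mk, h]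
  ring
end

section
/- Parseval-type identity with a twist: for f, g : X → ℂ and α ∈ G, ⟨α⁻¹·f, g⟩ = (1/n) Σ_{ψ∈Ĝ} ψ(α) Σ_{λ∈(X̂)_ψ} f̂(conj(λ))·conj(ĝ(conj(λ))), where (α⁻¹·f)(x) = f(αx). In particular, taking α = 1, ⟨f, g⟩ = (1/n)⟨f̂, ĝ⟩. -/
open Finset

/-- Twisted Parseval identity: ⟨α⁻¹·f, g⟩ = (1/n) Σ_λ ψ_λ(α) f̂(conj λ) conj(ĝ(conj λ)),
the sum over the G-dual grouped by the characters ψ_λ; in particular (α = 1)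
⟨f,g⟩ = (1/n)⟨f̂,ĝ⟩. -/
theorem stmt12 {G X : Type*} [CommGroup G] [Fintype G] [Fintype X] [DecidableEq X] [MulAction G X]
    (Λ : X → (X → ℂ)) (Ψ : X → (G →* ℂ))
    (horth : ∀ i j : X, ∑ x : X, Λ i x * (starRingEnd ℂ) (Λ j x)
      = if i = j then (Fintype.card X : ℂ) else 0)
    (hlin : ∀ (i : X) (α : G) (x : X), Λ i (α • x) = Ψ i α * Λ i x)
    (f g : X → ℂ) (α : G) :
    (∑ x : X, f (α • x) * (starRingEnd ℂ) (g x)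
      = (1 / (Fintype.card X : ℂ)) * ∑ i : X, Ψ i α *
          ((∑ x : X, f x * (starRingEnd ℂ) (Λ i x)) *
            (starRingEnd ℂ) (∑ x : X, g x * (starRingEnd ℂ) (Λ i x)))) ∧
    (∑ x : X, f x * (starRingEnd ℂ) (g x)
      = (1 / (Fintype.card X : ℂ)) * ∑ i : X,
          (∑ x : X, f x * Λ i x) * (starRingEnd ℂ) (∑ x : X, g x * Λ i x)) := by
  rcases isEmpty_or_nonempty X with hX | hX
  · constructor <;> simp
  set n : ℂ := (Fintype.card X : ℂ) with hn'
  have hn : n ≠ 0 := by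
    simp [hn']
  -- column orthogonality (conj on the left)
  have hcol : ∀ x y : X, ∑ i : X, (starRingEnd ℂ) (Λ i x) * Λ i y
      = if x = y then n else 0 := by
    have h1 : (Matrix.of fun i x => Λ i x) *
        (n⁻¹ • (Matrix.of fun i x => Λ i x).conjTranspose) = 1 := by
      ext i j
      simp only [Matrix.mul_apply, Matrix.smul_apply, Matrix.conjTranspose_apply,
        Matrix.of_apply, smul_eq_mul, Matrix.one_apply]
      rw [Finset.sum_congr rfl fun x _ => show Λ i x * (n⁻¹ * star (Λ j x))
          = n⁻¹ * (Λ i x * (starRingEnd ℂ) (Λ j x)) from by rw [starRingEnd_apply]; ring]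
      rw [← Finset.mul_sum, horth i j]
      by_cases h : i = j <;> simp [h, inv_mul_cancel₀ hn, hn']
    have h2 := mul_eq_one_comm.mp h1
    intro x y
    have h3 := congrFun (congrFun h2 x) y
    simp only [Matrix.mul_apply, Matrix.smul_apply, Matrix.conjTranspose_apply,
      Matrix.of_apply, smul_eq_mul, Matrix.one_apply] at h3
    rw [Finset.sum_congr rfl fun i _ => show n⁻¹ * star (Λ i x) * Λ i y
        = n⁻¹ * ((starRingEnd ℂ) (Λ i x) * Λ i y) from by rw [starRingEnd_apply]; ring,
      ← Finset.mul_sum] at h3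
    have h4 := congrArg (n * ·) h3
    simp only [← mul_assoc, mul_inv_cancel₀ hn, one_mul] at h4
    rw [h4]
    by_cases h : x = y <;> simp [h]
  -- column orthogonality (conj on the right)
  have hcol' : ∀ x y : X, ∑ i : X, Λ i x * (starRingEnd ℂ) (Λ i y)
      = if x = y then n else 0 := by
    intro x y
    have := congrArg (starRingEnd ℂ) (hcol x y)
    rw [map_sum] at this
    simp only [map_mul, RingHomInvPair.comp_apply_eq] at this
    rw [show (∑ i : X, Λ i x * (starRingEnd ℂ) (Λ i y))
        = ∑ i : X, (starRingEnd ℂ) ((starRingEnd ℂ) (Λ i x)) * (starRingEnd ℂ) (Λ i y) from by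
      simp] at *
    rw [this]
    by_cases h : x = y <;> simp [h, hn']
  -- |Ψ i α| = 1
  have hpsi : ∀ i : X, Ψ i α * (starRingEnd ℂ) (Ψ i α) = 1 := by
    intro i
    have hii : ∑ x : X, Λ i x * (starRingEnd ℂ) (Λ i x) = n := by simpa [hn'] using horth i i
    have h2 : (Ψ i α * (starRingEnd ℂ) (Ψ i α)) * n = n := by
      calc (Ψ i α * (starRingEnd ℂ) (Ψ i α)) * n
          = (Ψ i α * (starRingEnd ℂ) (Ψ i α)) * ∑ x : X, Λ i x * (starRingEnd ℂ) (Λ i x) := by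
            rw [hii]
        _ = ∑ x : X, Λ i (α • x) * (starRingEnd ℂ) (Λ i (α • x)) := by
            rw [Finset.mul_sum]
            exact Finset.sum_congr rfl fun x _ => by rw [hlin, map_mul]; ring
        _ = n := (Fintype.sum_equiv (MulAction.toPerm α)
              (fun x => Λ i (α • x) * (starRingEnd ℂ) (Λ i (α • x)))
              (fun y => Λ i y * (starRingEnd ℂ) (Λ i y)) (fun x => rfl)).trans hii
    exact mul_right_cancel₀ hn (h2.trans (one_mul n).symm)
  -- twisted column identity
  have hkey : ∀ x y : X, ∑ i : X, Ψ i α * ((starRingEnd ℂ) (Λ i x) * Λ i y)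
      = if α⁻¹ • x = y then n else 0 := by
    intro x y
    have hconj : ∀ i : X, Ψ i α * (starRingEnd ℂ) (Λ i x)
        = (starRingEnd ℂ) (Λ i (α⁻¹ • x)) := by
      intro i
      have h := hlin i α (α⁻¹ • x)
      rw [smul_inv_smul] at h
      have h2 : (starRingEnd ℂ) (Λ i x)
          = (starRingEnd ℂ) (Ψ i α) * (starRingEnd ℂ) (Λ i (α⁻¹ • x)) := by
        rw [← map_mul, ← h]
      rw [h2, ← mul_assoc, hpsi i, one_mul]
    calc ∑ i : X, Ψ i α * ((starRingEnd ℂ) (Λ i x) * Λ i y)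
        = ∑ i : X, (starRingEnd ℂ) (Λ i (α⁻¹ • x)) * Λ i y :=
          Finset.sum_congr rfl fun i _ => by rw [← mul_assoc, hconj i]
      _ = if α⁻¹ • x = y then n else 0 := hcol _ _
  constructor
  · -- twisted Parseval
    have expand : ∑ i : X, Ψ i α *
        ((∑ x : X, f x * (starRingEnd ℂ) (Λ i x)) *
          (starRingEnd ℂ) (∑ y : X, g y * (starRingEnd ℂ) (Λ i y)))
        = ∑ x : X, ∑ y : X, (f x * (starRingEnd ℂ) (g y)) *
            ∑ i : X, Ψ i α * ((starRingEnd ℂ) (Λ i x) * Λ i y) := by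
      have step1 : ∀ i : X, Ψ i α *
          ((∑ x : X, f x * (starRingEnd ℂ) (Λ i x)) *
            (starRingEnd ℂ) (∑ y : X, g y * (starRingEnd ℂ) (Λ i y)))
          = ∑ x : X, ∑ y : X, (f x * (starRingEnd ℂ) (g y)) *
              (Ψ i α * ((starRingEnd ℂ) (Λ i x) * Λ i y)) := by
        intro i
        rw [map_sum, Finset.sum_mul_sum, Finset.mul_sum]
        refine Finset.sum_congr rfl fun x _ => ?_
        rw [Finset.mul_sum]
        refine Finset.sum_congr rfl fun y _ => ?_
        simp only [map_mul, RingHomInvPair.comp_apply_eq]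
        ring
      rw [Finset.sum_congr rfl fun i _ => step1 i, Finset.sum_comm]
      refine Finset.sum_congr rfl fun x _ => ?_
      rw [Finset.sum_comm]
      exact Finset.sum_congr rfl fun y _ => by rw [Finset.mul_sum]
    rw [expand]
    have collapse : ∑ x : X, ∑ y : X, (f x * (starRingEnd ℂ) (g y)) *
        ∑ i : X, Ψ i α * ((starRingEnd ℂ) (Λ i x) * Λ i y)
        = n * ∑ x : X, f (α • x) * (starRingEnd ℂ) (g x) := by
      calc ∑ x : X, ∑ y : X, (f x * (starRingEnd ℂ) (g y)) *
            ∑ i : X, Ψ i α * ((starRingEnd ℂ) (Λ i x) * Λ i y)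
          = ∑ x : X, (f x * (starRingEnd ℂ) (g (α⁻¹ • x))) * n := by
            refine Finset.sum_congr rfl fun x _ => ?_
            rw [Finset.sum_congr rfl fun y _ => by rw [hkey x y]]
            simp only [mul_ite, mul_zero]
            rw [Finset.sum_ite_eq]
            simp
        _ = ∑ x : X, (f (α • x) * (starRingEnd ℂ) (g x)) * n := by
            refine Fintype.sum_equiv (MulAction.toPerm α)
              (fun x => (f (α • x) * (starRingEnd ℂ) (g x)) * n)
              (fun x => (f x * (starRingEnd ℂ) (g (α⁻¹ • x))) * n) (fun x => by
                simp [MulAction.toPerm, inv_smul_smul]) |>.symm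
        _ = n * ∑ x : X, f (α • x) * (starRingEnd ℂ) (g x) := by
            rw [Finset.mul_sum]; exact Finset.sum_congr rfl fun x _ => by ring
    rw [collapse, ← mul_assoc, one_div, inv_mul_cancel₀ hn, one_mul]
  · -- plain Parseval
    have expand : ∑ i : X, (∑ x : X, f x * Λ i x) *
        (starRingEnd ℂ) (∑ y : X, g y * Λ i y)
        = ∑ x : X, ∑ y : X, (f x * (starRingEnd ℂ) (g y)) *
            ∑ i : X, Λ i x * (starRingEnd ℂ) (Λ i y) := by
      have step1 : ∀ i : X, (∑ x : X, f x * Λ i x) *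
          (starRingEnd ℂ) (∑ y : X, g y * Λ i y)
          = ∑ x : X, ∑ y : X, (f x * (starRingEnd ℂ) (g y)) *
              (Λ i x * (starRingEnd ℂ) (Λ i y)) := by
        intro i
        rw [map_sum, Finset.sum_mul_sum]
        refine Finset.sum_congr rfl fun x _ => ?_
        refine Finset.sum_congr rfl fun y _ => ?_
        simp only [map_mul]
        ring
      rw [Finset.sum_congr rfl fun i _ => step1 i, Finset.sum_comm]
      refine Finset.sum_congr rfl fun x _ => ?_
      rw [Finset.sum_comm]
      exact Finset.sum_congr rfl fun y _ => by rw [Finset.mul_sum]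
    rw [expand]
    have collapse : ∑ x : X, ∑ y : X, (f x * (starRingEnd ℂ) (g y)) *
        ∑ i : X, Λ i x * (starRingEnd ℂ) (Λ i y)
        = n * ∑ x : X, f x * (starRingEnd ℂ) (g x) := by
      calc ∑ x : X, ∑ y : X, (f x * (starRingEnd ℂ) (g y)) *
            ∑ i : X, Λ i x * (starRingEnd ℂ) (Λ i y)
          = ∑ x : X, (f x * (starRingEnd ℂ) (g x)) * n := by
            refine Finset.sum_congr rfl fun x _ => ?_
            rw [Finset.sum_congr rfl fun y _ => by rw [hcol' x y]]
            simp only [mul_ite, mul_zero]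
            rw [Finset.sum_ite_eq]
            simp
        _ = n * ∑ x : X, f x * (starRingEnd ℂ) (g x) := by
            rw [Finset.mul_sum]; exact Finset.sum_congr rfl fun x _ => by ring
    rw [collapse, ← mul_assoc, one_div, inv_mul_cancel₀ hn, one_mul]
end

section
/- A unitary function f : X → T (|f(x)|=1) is bent, i.e., Σ_{λ∈(X̂)_ψ} |f̂(λ)|² = n²/m for every irreducible character ψ of G, if and only if f has totally balanced derivatives: Σ_{x∈X} f(αx)·conj(f(x)) = 0 for every non-identity α ∈ G. -/
open Finset

private lemma dualOrth {X : Type*} [Fintype X] [DecidableEq X] (Λ : X → X → ℂ)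
    (horth : ∀ i j : X, ∑ x : X, Λ i x * (starRingEnd ℂ) (Λ j x)
      = if i = j then (Fintype.card X : ℂ) else 0) (x y : X) :
    ∑ i : X, Λ i x * (starRingEnd ℂ) (Λ i y) = if x = y then (Fintype.card X : ℂ) else 0 := by
  have hn : (Fintype.card X : ℂ) ≠ 0 := by
    exact_mod_cast (Fintype.card_pos_iff.mpr ⟨x⟩).ne'
  set n : ℂ := (Fintype.card X : ℂ) with hndef
  have horth' : ∀ i j : X, ∑ x : X, Λ i x * star (Λ j x)
      = if i = j then n else 0 := by
    simpa only [starRingEnd_apply] using horth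
  let M : Matrix X X ℂ := Matrix.of fun i z => Λ i z
  have hAB : M * (n⁻¹ • M.conjTranspose) = 1 := by
    ext i j
    simp only [Matrix.mul_apply, Matrix.smul_apply, Matrix.conjTranspose_apply, Matrix.of_apply,
      Matrix.one_apply, M, smul_eq_mul]
    have h1 : ∀ z : X, Λ i z * (n⁻¹ * star (Λ j z))
        = n⁻¹ * (Λ i z * star (Λ j z)) := fun z => by ring
    rw [Finset.sum_congr rfl fun z _ => h1 z, ← Finset.mul_sum, horth']
    split_ifs with h
    · exact inv_mul_cancel₀ hn
    · simp
  have hBA := mul_eq_one_comm.mp hAB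
  have h2 := congrFun (congrFun hBA x) y
  simp only [Matrix.mul_apply, Matrix.smul_apply, Matrix.conjTranspose_apply, Matrix.of_apply,
    Matrix.one_apply, M, smul_eq_mul] at h2
  have h3 : ∀ i : X, n⁻¹ * star (Λ i x) * Λ i y
      = n⁻¹ * (star (Λ i x) * Λ i y) := fun i => by ring
  rw [Finset.sum_congr rfl fun i _ => h3 i, ← Finset.mul_sum] at h2
  have h4 : ∑ i : X, star (Λ i x) * Λ i y = if x = y then n else 0 := by
    rcases eq_or_ne x y with h | h
    · simp only [h, if_true] at h2 ⊢
      rw [inv_mul_eq_one₀ hn] at h2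
      exact h2.symm
    · simp only [h, if_false] at h2 ⊢
      rcases mul_eq_zero.mp h2 with hc | hc
      · exact absurd hc (inv_ne_zero hn)
      · exact hc
  have h5 := congrArg star h4
  rw [star_sum] at h5
  simp only [star_mul', star_star] at h5
  rw [show (∑ i : X, Λ i x * (starRingEnd ℂ) (Λ i y))
      = ∑ i : X, Λ i x * star (Λ i y) from rfl, h5]
  rcases eq_or_ne x y with h | h <;> simp [h, hndef]

/-- A unitary function f on the G-set X is bent, i.e.
Σ_{λ ∈ (X̂)_ψ} |f̂(λ)|² = n²/m for every irreducible character ψ,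
iff f has totally balanced derivatives. -/
theorem stmt15 {G X : Type*} [CommGroup G] [Fintype G] [Fintype X] [DecidableEq X]
    [MulAction G X] [DecidableEq (G →* ℂ)]
    (Λ : X → (X → ℂ)) (Ψ : X → (G →* ℂ))
    (horth : ∀ i j : X, ∑ x : X, Λ i x * (starRingEnd ℂ) (Λ j x)
      = if i = j then (Fintype.card X : ℂ) else 0)
    (hlin : ∀ (i : X) (α : G) (x : X), Λ i (α • x) = Ψ i α * Λ i x)
    (hconj : ∀ i : X, ∃ j : X, (fun x => (starRingEnd ℂ) (Λ i x)) = Λ j)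
    (f : X → ℂ) (hf : ∀ x : X, ‖f x‖ = 1) :
    (∀ ψ : G →* ℂ,
        ∑ i ∈ Finset.univ.filter (fun i => Ψ i = ψ),
          ‖∑ x : X, f x * Λ i x‖ ^ 2
        = (Fintype.card X : ℝ) ^ 2 / (Fintype.card G : ℝ)) ↔
      (∀ α : G, α ≠ 1 → ∑ x : X, f (α • x) * (starRingEnd ℂ) (f x) = 0) := by
  classical
  set n : ℂ := (Fintype.card X : ℂ) with hndef
  set m : ℂ := (Fintype.card G : ℂ) with hmdef
  have hm0 : m ≠ 0 := by
    simp only [hmdef, ne_eq, Nat.cast_eq_zero]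
    exact Fintype.card_ne_zero
  set Fh : X → ℂ := fun i => ∑ x : X, f x * Λ i x with hFh
  set D : G → ℂ := fun α => ∑ x : X, f (α • x) * (starRingEnd ℂ) (f x) with hD
  -- character values are on the unit circle
  have hu : ∀ (ψ : G →* ℂ) (α : G), ψ α * (starRingEnd ℂ) (ψ α) = 1 := by
    intro ψ α
    have h1 : (ψ α) ^ (Fintype.card G) = 1 := by
      rw [← map_pow, pow_card_eq_one, map_one]
    have h3 : ‖ψ α‖ = 1 := by
      have := Complex.norm_eq_one_of_pow_eq_one h1 Fintype.card_ne_zero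
      exact this
    rw [Complex.mul_conj, ← Complex.sq_norm, h3]
    norm_num
  -- orthogonality of characters
  have hO : ∀ ψ₁ ψ₂ : G →* ℂ, ∑ α : G, ψ₁ α * (starRingEnd ℂ) (ψ₂ α)
      = if ψ₁ = ψ₂ then m else 0 := by
    intro ψ₁ ψ₂
    split_ifs with h
    · subst h
      simp only [hu]
      simp [hmdef, card_univ]
    · obtain ⟨β, hβ⟩ : ∃ β : G, ψ₁ β ≠ ψ₂ β := by
        by_contra hc
        push_neg at hc
        exact h (MonoidHom.ext hc)
      set S := ∑ α : G, ψ₁ α * (starRingEnd ℂ) (ψ₂ α) with hS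
      have hrec : (ψ₁ β * (starRingEnd ℂ) (ψ₂ β)) * S = S := by
        rw [hS, Finset.mul_sum]
        rw [← Equiv.sum_comp (Equiv.mulLeft β) (fun α => ψ₁ α * (starRingEnd ℂ) (ψ₂ α))]
        refine Finset.sum_congr rfl fun α _ => ?_
        simp only [Equiv.coe_mulLeft, map_mul]
        ring
      have hne1 : ψ₁ β * (starRingEnd ℂ) (ψ₂ β) ≠ 1 := by
        intro hc
        apply hβ
        calc ψ₁ β = ψ₁ β * ((starRingEnd ℂ) (ψ₂ β) * ψ₂ β) := by
              rw [mul_comm ((starRingEnd ℂ) (ψ₂ β)), hu, mul_one]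
          _ = (ψ₁ β * (starRingEnd ℂ) (ψ₂ β)) * ψ₂ β := by ring
          _ = ψ₂ β := by rw [hc, one_mul]
      have hz : (ψ₁ β * (starRingEnd ℂ) (ψ₂ β) - 1) * S = 0 := by
        rw [sub_mul, hrec, one_mul, sub_self]
      rcases mul_eq_zero.mp hz with hc | hc
      · exact absurd (sub_eq_zero.mp hc) hne1
      · exact hc
  -- the key Fourier identity
  have hB : ∀ α : G, ∑ i : X, (Fh i * (starRingEnd ℂ) (Fh i)) * Ψ i α
      = n * (starRingEnd ℂ) (D α) := by
    intro α
    have h1 : ∀ i : X, (Fh i * (starRingEnd ℂ) (Fh i)) * Ψ i α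
        = ∑ x : X, ∑ y : X,
          (f x * (starRingEnd ℂ) (f y)) * (Λ i (α • x) * (starRingEnd ℂ) (Λ i y)) := by
      intro i
      rw [show Fh i = ∑ x : X, f x * Λ i x from rfl, map_sum, Finset.sum_mul_sum,
        Finset.sum_mul]
      simp_rw [Finset.sum_mul]
      refine Finset.sum_congr rfl fun x _ => Finset.sum_congr rfl fun y _ => ?_
      rw [hlin i α x, map_mul]
      ring
    calc ∑ i : X, (Fh i * (starRingEnd ℂ) (Fh i)) * Ψ i α
        = ∑ i : X, ∑ x : X, ∑ y : X,
            (f x * (starRingEnd ℂ) (f y)) * (Λ i (α • x) * (starRingEnd ℂ) (Λ i y)) :=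
          Finset.sum_congr rfl fun i _ => h1 i
      _ = ∑ x : X, ∑ y : X, (f x * (starRingEnd ℂ) (f y))
            * ∑ i : X, Λ i (α • x) * (starRingEnd ℂ) (Λ i y) := by
          rw [Finset.sum_comm]
          refine Finset.sum_congr rfl fun x _ => ?_
          rw [Finset.sum_comm]
          exact Finset.sum_congr rfl fun y _ => (Finset.mul_sum _ _ _).symm
      _ = ∑ x : X, (f x * (starRingEnd ℂ) (f (α • x))) * n := by
          refine Finset.sum_congr rfl fun x _ => ?_
          simp_rw [dualOrth Λ horth (α • x), mul_ite, mul_zero]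
          rw [Finset.sum_ite_eq]
          simp [hndef]
      _ = n * (starRingEnd ℂ) (D α) := by
          rw [show D α = ∑ x : X, f (α • x) * (starRingEnd ℂ) (f x) from rfl, map_sum,
            Finset.mul_sum]
          refine Finset.sum_congr rfl fun x _ => ?_
          rw [map_mul, Complex.conj_conj]
          ring
  -- fiber extraction
  have hC : ∀ ψ : G →* ℂ, ∑ α : G, (starRingEnd ℂ) (ψ α) * (n * (starRingEnd ℂ) (D α))
      = m * ∑ i ∈ Finset.univ.filter (fun i => Ψ i = ψ), Fh i * (starRingEnd ℂ) (Fh i) := by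
    intro ψ
    calc ∑ α : G, (starRingEnd ℂ) (ψ α) * (n * (starRingEnd ℂ) (D α))
        = ∑ α : G, ∑ i : X, (Fh i * (starRingEnd ℂ) (Fh i)) * Ψ i α * (starRingEnd ℂ) (ψ α) := by
          refine Finset.sum_congr rfl fun α _ => ?_
          rw [← hB α, Finset.mul_sum]
          exact Finset.sum_congr rfl fun i _ => by ring
      _ = ∑ i : X, ∑ α : G, (Fh i * (starRingEnd ℂ) (Fh i)) * Ψ i α * (starRingEnd ℂ) (ψ α) :=
          Finset.sum_comm
      _ = ∑ i : X, (Fh i * (starRingEnd ℂ) (Fh i)) * ∑ α : G, Ψ i α * (starRingEnd ℂ) (ψ α) := by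
          refine Finset.sum_congr rfl fun i _ => ?_
          rw [Finset.mul_sum]
          exact Finset.sum_congr rfl fun α _ => by ring
      _ = ∑ i : X, (Fh i * (starRingEnd ℂ) (Fh i)) * (if Ψ i = ψ then m else 0) :=
          Finset.sum_congr rfl fun i _ => by rw [hO (Ψ i) ψ]
      _ = m * ∑ i ∈ Finset.univ.filter (fun i => Ψ i = ψ), Fh i * (starRingEnd ℂ) (Fh i) := by
          rw [Finset.mul_sum, Finset.sum_filter]
          exact Finset.sum_congr rfl fun i _ => by split_ifs <;> ring
  -- cast fact
  have hcast : ∀ ψ : G →* ℂ,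
      ((∑ i ∈ Finset.univ.filter (fun i => Ψ i = ψ), ‖Fh i‖ ^ 2 : ℝ) : ℂ)
      = ∑ i ∈ Finset.univ.filter (fun i => Ψ i = ψ), Fh i * (starRingEnd ℂ) (Fh i) := by
    intro ψ
    push_cast
    refine Finset.sum_congr rfl fun i _ => ?_
    rw [Complex.mul_conj, ← Complex.sq_norm]
    push_cast
    ring
  have hD1 : D 1 = n := by
    rw [show D 1 = ∑ x : X, f ((1:G) • x) * (starRingEnd ℂ) (f x) from rfl]
    have h1 : ∀ x : X, f ((1:G) • x) * (starRingEnd ℂ) (f x) = 1 := by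
      intro x
      rw [one_smul, Complex.mul_conj, ← Complex.sq_norm, hf x]
      norm_num
    simp only [h1]
    simp [hndef, card_univ]
  constructor
  · -- bent → balanced derivatives
    intro hbent α hα
    rcases isEmpty_or_nonempty X with hX | hX
    · simp [Finset.univ_eq_empty]
    · have hn0 : n ≠ 0 := by
        simp only [hndef, ne_eq, Nat.cast_eq_zero]
        exact Fintype.card_ne_zero
      have hval : ∀ ψ : G →* ℂ,
          (∑ i ∈ Finset.univ.filter (fun i => Ψ i = ψ), Fh i * (starRingEnd ℂ) (Fh i))
          = n ^ 2 / m := by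
        intro ψ
        rw [← hcast ψ, hbent ψ]
        push_cast
        ring
      have himg : ∀ ψ : G →* ℂ, ψ ∈ Finset.univ.image Ψ := by
        intro ψ
        by_contra hmem
        have hemp : Finset.univ.filter (fun i => Ψ i = ψ) = ∅ := by
          ext i
          simp only [Finset.mem_filter, Finset.mem_univ, true_and, Finset.notMem_empty,
            iff_false]
          intro hc
          exact hmem (Finset.mem_image.mpr ⟨i, Finset.mem_univ i, hc⟩)
        have hv := hval ψ
        rw [hemp, Finset.sum_empty] at hv
        exact (div_ne_zero (pow_ne_zero 2 hn0) hm0) hv.symm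
      have : NeZero ((Monoid.exponent G : ℂ)) :=
        ⟨by exact_mod_cast Monoid.exponent_ne_zero_of_finite⟩
      obtain ⟨χ, hχ⟩ := CommGroup.exists_apply_ne_one_of_hasEnoughRootsOfUnity G ℂ hα
      set ψ₀ : G →* ℂ := (Units.coeHom ℂ).comp χ with hψ₀
      set ψ₀' : G →* ℂ := (Units.coeHom ℂ).comp χ⁻¹ with hψ₀'
      have hψ₀α : ψ₀ α ≠ 1 := by
        simp only [hψ₀, MonoidHom.coe_comp, Units.coeHom_apply, Function.comp_apply]
        exact fun hc => hχ (Units.ext hc)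
      have hScancel : ∑ ψ ∈ Finset.univ.image Ψ, (ψ₀ * ψ) α
          = ∑ ψ ∈ Finset.univ.image Ψ, ψ α := by
        refine Finset.sum_nbij' (fun ψ => ψ₀ * ψ) (fun ψ => ψ₀' * ψ) ?_ ?_ ?_ ?_ ?_
        · intro ψ _; exact himg _
        · intro ψ _; exact himg _
        · intro ψ _
          ext g
          simp [hψ₀, hψ₀']
        · intro ψ _
          ext g
          simp [hψ₀, hψ₀']
        · intro ψ _; rfl
      have hS0 : ∑ ψ ∈ Finset.univ.image Ψ, ψ α = 0 := by
        have h1 : ψ₀ α * ∑ ψ ∈ Finset.univ.image Ψ, ψ α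
            = ∑ ψ ∈ Finset.univ.image Ψ, ψ α := by
          rw [Finset.mul_sum, ← hScancel]
          exact Finset.sum_congr rfl fun ψ _ => rfl
        have h2 : (ψ₀ α - 1) * ∑ ψ ∈ Finset.univ.image Ψ, ψ α = 0 := by
          rw [sub_mul, h1, one_mul, sub_self]
        rcases mul_eq_zero.mp h2 with hc | hc
        · exact absurd (sub_eq_zero.mp hc) hψ₀α
        · exact hc
      have hkey : n * (starRingEnd ℂ) (D α) = 0 := by
        rw [← hB α]
        rw [← Finset.sum_fiberwise_of_maps_to (g := Ψ) (fun i _ => himg (Ψ i))]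
        have hstep : ∀ ψ ∈ Finset.univ.image Ψ,
            (∑ i ∈ Finset.univ.filter (fun i => Ψ i = ψ),
              (Fh i * (starRingEnd ℂ) (Fh i)) * Ψ i α)
            = (n ^ 2 / m) * ψ α := by
          intro ψ _
          rw [← hval ψ, Finset.sum_mul]
          refine Finset.sum_congr rfl fun i hi => ?_
          rw [(Finset.mem_filter.mp hi).2]
        rw [Finset.sum_congr rfl hstep, ← Finset.mul_sum, hS0, mul_zero]
      have hc0 : (starRingEnd ℂ) (D α) = 0 := by
        rcases mul_eq_zero.mp hkey with hc | hc
        · exact absurd hc hn0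
        · exact hc
      have hDα : D α = 0 := by
        have := congrArg (starRingEnd ℂ) hc0
        simpa using this
      exact hDα
  · -- balanced derivatives → bent
    intro hbal ψ
    have h1 : ∑ α : G, (starRingEnd ℂ) (ψ α) * (n * (starRingEnd ℂ) (D α)) = n ^ 2 := by
      rw [Finset.sum_eq_single 1]
      · rw [hD1, map_one, map_one, one_mul]
        have hcn : (starRingEnd ℂ) n = n := by
          simp [hndef]
        rw [hcn]
        ring
      · intro α _ hα
        have : D α = 0 := hbal α hα
        rw [this]
        simp
      · intro h
        exact absurd (Finset.mem_univ 1) h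
    rw [hC ψ] at h1
    have h2 : (∑ i ∈ Finset.univ.filter (fun i => Ψ i = ψ), Fh i * (starRingEnd ℂ) (Fh i))
        = n ^ 2 / m := by
      field_simp
      linear_combination h1
    have h3 := hcast ψ
    rw [h2] at h3
    have hgoal : ((∑ i ∈ Finset.univ.filter (fun i => Ψ i = ψ), ‖Fh i‖ ^ 2 : ℝ) : ℂ)
        = (((Fintype.card X : ℝ) ^ 2 / (Fintype.card G : ℝ) : ℝ) : ℂ) := by
      rw [h3]
      push_cast
      ring
    exact_mod_cast hgoal
end

section
/- If the G-action on X admits an irreducible character ψ of G for which there is no nonzero ψ-linear function X → ℂ, then there exists no bent function f : X → T. -/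
open Finset

lemma stmt16_aux {G : Type*} [CommGroup G] [Fintype G] (ψ : G →* ℂ) (β : G) :
    (starRingEnd ℂ) (ψ β) = ψ β⁻¹ := by
  have h1 : ψ β ^ Fintype.card G = 1 := by
    rw [← map_pow, pow_card_eq_one, map_one]
  have habs : ‖ψ β‖ = 1 := by
    have h2 : ‖ψ β ^ Fintype.card G‖ = ‖(1:ℂ)‖ := congrArg norm h1
    rw [norm_pow, norm_one] at h2
    have h3 : (0:ℝ) ≤ ‖ψ β‖ := norm_nonneg _
    have hc : (Fintype.card G) ≠ 0 := Fintype.card_ne_zero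
    rcases (pow_eq_one_iff_cases).mp h2 with h | h | h
    · exact absurd h hc
    · exact h
    · nlinarith [h.1]
  have hinv : ψ β * ψ β⁻¹ = 1 := by
    rw [← map_mul, mul_inv_cancel, map_one]
  have hconj : ψ β * (starRingEnd ℂ) (ψ β) = 1 := by
    rw [Complex.mul_conj, Complex.normSq_eq_norm_sq, habs]
    norm_num
  have h4 : ψ β⁻¹ = (ψ β)⁻¹ := eq_inv_of_mul_eq_one_right hinv
  have h5 : (starRingEnd ℂ) (ψ β) = (ψ β)⁻¹ := eq_inv_of_mul_eq_one_right hconj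
  rw [h5, h4]

/-- If for some irreducible character ψ of G there is no nonzero ψ-linear
function on X, then no bent function (equivalently, no unitary function with
totally balanced derivatives) exists on X. -/
theorem stmt16 {G X : Type*} [CommGroup G] [Fintype G] [Fintype X] [Nonempty X]
    [MulAction G X]
    (hψ : ∃ ψ : G →* ℂ, ∀ f : X → ℂ,
      (∀ (α : G) (x : X), f (α • x) = ψ α * f x) → f = 0) :
    ¬ ∃ f : X → ℂ, (∀ x : X, ‖f x‖ = 1) ∧
      (∀ α : G, α ≠ 1 → ∑ x : X, f (α • x) * (starRingEnd ℂ) (f x) = 0) := by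
  rintro ⟨f, hf1, hf2⟩
  obtain ⟨ψ, hlin⟩ := hψ
  set g : X → ℂ := fun x => ∑ α : G, (starRingEnd ℂ) (ψ α) * f (α • x) with hg
  have hglin : ∀ (β : G) (x : X), g (β • x) = ψ β * g x := by
    intro β x
    rw [hg]
    simp only
    rw [Finset.mul_sum]
    refine Fintype.sum_equiv (Equiv.mulRight β) _ _ ?_
    intro α
    simp only [Equiv.coe_mulRight]
    have h1 : (α * β) • x = α • β • x := mul_smul α β x
    have h2 : (starRingEnd ℂ) (ψ (α * β)) = (starRingEnd ℂ) (ψ α) * ψ β⁻¹ := by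
      rw [map_mul, map_mul, stmt16_aux ψ β]
    have h3 : ψ β * ψ β⁻¹ = 1 := by
      rw [← map_mul, mul_inv_cancel, map_one]
    rw [h1, h2]
    linear_combination (-((starRingEnd ℂ) (ψ α) * f (α • β • x))) * h3
  have hg0 : g = 0 := hlin g hglin
  have hsum : ∑ x : X, g x * (starRingEnd ℂ) (f x) = (Fintype.card X : ℂ) := by
    have hswap : ∑ x : X, g x * (starRingEnd ℂ) (f x)
        = ∑ α : G, (starRingEnd ℂ) (ψ α) * ∑ x : X, f (α • x) * (starRingEnd ℂ) (f x) := by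
      simp only [hg, Finset.sum_mul]
      rw [Finset.sum_comm]
      simp [Finset.mul_sum, mul_assoc]
    rw [hswap, Finset.sum_eq_single (1 : G)]
    · simp only [map_one, one_smul]
      have hone : ∀ x : X, f x * (starRingEnd ℂ) (f x) = 1 := by
        intro x
        rw [Complex.mul_conj, Complex.normSq_eq_norm_sq, hf1 x]
        norm_num
      simp [hone]
    · intro α _ hα
      rw [hf2 α hα, mul_zero]
    · simp
  rw [hg0] at hsum
  simp only [Pi.zero_apply, zero_mul, Finset.sum_const_zero] at hsum
  have hne : (Fintype.card X : ℂ) ≠ 0 := by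
    simp [Fintype.card_ne_zero]
  exact hne hsum.symm
end

section
/- For any unitary function f : X → T, the distance from f to the set of G-linear functions satisfies d(f, (ℂ^X)_G) ≤ √((m−1)n/m), with equality if and only if f is bent (equivalently, iff the lengths |f_ψ| of all classical components of f are equal). -/
open Finset

open Finset

namespace Stmt17Aux

variable {G X : Type*} [CommGroup G] [Fintype G] [Fintype X] [MulAction G X]

noncomputable def P (ψ : G →* ℂ) (f : X → ℂ) (x : X) : ℂ :=
  (1 / (Fintype.card G : ℂ)) * ∑ α : G, ψ α * f (α⁻¹ • x)

lemma norm_apply (ψ : G →* ℂ) (α : G) : ‖ψ α‖ = 1 := by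
  have h : ψ α ^ Fintype.card G = 1 := by
    rw [← map_pow, pow_card_eq_one, map_one]
  have h2 : ‖ψ α‖ ^ Fintype.card G = 1 := by
    rw [← norm_pow, h, norm_one]
  have h3 : (0:ℝ) ≤ ‖ψ α‖ := norm_nonneg _
  rcases lt_trichotomy ‖ψ α‖ 1 with hlt | heq | hgt
  · have := pow_lt_one₀ h3 hlt (Fintype.card_ne_zero (α := G)); linarith
  · exact heq
  · have := one_lt_pow₀ hgt (Fintype.card_ne_zero (α := G)); linarith

lemma normSq_apply (ψ : G →* ℂ) (α : G) : Complex.normSq (ψ α) = 1 := by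
  rw [← Complex.sq_norm, norm_apply]; norm_num

lemma conj_mul_self (ψ : G →* ℂ) (α : G) : (starRingEnd ℂ) (ψ α) * ψ α = 1 := by
  rw [Complex.conj_mul', ← Complex.ofReal_pow]
  norm_cast
  rw [norm_apply]; norm_num

lemma conj_apply (ψ : G →* ℂ) (α : G) : (starRingEnd ℂ) (ψ α) = ψ α⁻¹ := by
  have h1 : ψ α * ψ α⁻¹ = 1 := by rw [← map_mul, mul_inv_cancel, map_one]
  calc (starRingEnd ℂ) (ψ α) = (starRingEnd ℂ) (ψ α) * (ψ α * ψ α⁻¹) := by rw [h1, mul_one]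
    _ = ((starRingEnd ℂ) (ψ α) * ψ α) * ψ α⁻¹ := by ring
    _ = ψ α⁻¹ := by rw [conj_mul_self, one_mul]

lemma P_linear (ψ : G →* ℂ) (f : X → ℂ) (β : G) (x : X) : P ψ f (β • x) = ψ β * P ψ f x := by
  suffices h : ∑ α : G, ψ α * f (α⁻¹ • β • x) = ψ β * ∑ α : G, ψ α * f (α⁻¹ • x) by
    unfold P; rw [h]; ring
  rw [← Equiv.sum_comp (Equiv.mulLeft β) (fun α => ψ α * f (α⁻¹ • β • x)), Finset.mul_sum]
  refine Finset.sum_congr rfl fun γ _ => ?_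
  simp only [Equiv.coe_mulLeft]
  rw [map_mul, mul_inv_rev, mul_smul, inv_smul_smul, mul_assoc]

end Stmt17Aux

namespace Stmt17Aux
set_option linter.unusedSectionVars false

variable {G X : Type*} [CommGroup G] [Fintype G] [Fintype X] [MulAction G X]

lemma inner_P (ψ : G →* ℂ) (f h : X → ℂ) (hh : ∀ (α : G) (x : X), h (α • x) = ψ α * h x) :
    ∑ x : X, (starRingEnd ℂ) (h x) * P ψ f x = ∑ x : X, (starRingEnd ℂ) (h x) * f x := by
  have key : ∀ α : G, ∑ x : X, (starRingEnd ℂ) (h x) * f (α⁻¹ • x)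
      = (starRingEnd ℂ) (ψ α) * ∑ x : X, (starRingEnd ℂ) (h x) * f x := by
    intro α
    rw [← Equiv.sum_comp (MulAction.toPerm α) (fun x => (starRingEnd ℂ) (h x) * f (α⁻¹ • x)),
      Finset.mul_sum]
    refine Finset.sum_congr rfl fun y _ => ?_
    simp only [MulAction.toPerm_apply]
    rw [inv_smul_smul, hh, map_mul]
    ring
  have expand : ∑ x : X, (starRingEnd ℂ) (h x) * P ψ f x
      = (1 / (Fintype.card G : ℂ)) *
        ∑ α : G, ψ α * ∑ x : X, (starRingEnd ℂ) (h x) * f (α⁻¹ • x) := by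
    simp only [P, Finset.mul_sum, Finset.sum_mul]
    rw [Finset.sum_comm]
    exact Finset.sum_congr rfl fun x _ => Finset.sum_congr rfl fun α _ => by ring
  rw [expand]
  have term : ∀ α : G, ψ α * ((starRingEnd ℂ) (ψ α) * ∑ x : X, (starRingEnd ℂ) (h x) * f x)
      = ∑ x : X, (starRingEnd ℂ) (h x) * f x := by
    intro α
    rw [← mul_assoc, mul_comm (ψ α), conj_mul_self, one_mul]
  simp only [key, term]
  rw [Finset.sum_const, Finset.card_univ, nsmul_eq_mul]
  have hm : ((Fintype.card G : ℂ)) ≠ 0 := Nat.cast_ne_zero.mpr (Fintype.card_ne_zero (α := G))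
  field_simp

lemma pyth {f g : X → ℂ} (h : ∑ x : X, (starRingEnd ℂ) (g x) * (f x - g x) = 0) :
    ∑ x : X, Complex.normSq (f x - g x)
      = ∑ x : X, Complex.normSq (f x) - ∑ x : X, Complex.normSq (g x) := by
  have h2 := congrArg (starRingEnd ℂ) h
  simp only [map_sum, map_mul, map_sub, Complex.conj_conj, map_zero] at h2
  have key : (↑(∑ x : X, Complex.normSq (f x - g x)) : ℂ)
      = ↑(∑ x : X, Complex.normSq (f x)) - ↑(∑ x : X, Complex.normSq (g x)) := by
    push_cast [← Complex.mul_conj]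
    calc ∑ x : X, (f x - g x) * (starRingEnd ℂ) (f x - g x)
        = ∑ x : X, (f x * (starRingEnd ℂ) (f x) - g x * (starRingEnd ℂ) (g x)
            - (starRingEnd ℂ) (g x) * (f x - g x)
            - g x * ((starRingEnd ℂ) (f x) - (starRingEnd ℂ) (g x))) := by
          refine Finset.sum_congr rfl fun x _ => ?_
          simp only [map_sub]; ring
      _ = ∑ x : X, f x * (starRingEnd ℂ) (f x) - ∑ x : X, g x * (starRingEnd ℂ) (g x)
            - ∑ x : X, (starRingEnd ℂ) (g x) * (f x - g x)
            - ∑ x : X, g x * ((starRingEnd ℂ) (f x) - (starRingEnd ℂ) (g x)) := by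
          simp only [Finset.sum_sub_distrib]
      _ = ∑ x : X, f x * (starRingEnd ℂ) (f x) - ∑ x : X, g x * (starRingEnd ℂ) (g x) := by
          rw [h, h2]; ring
  exact_mod_cast key

end Stmt17Aux

namespace Stmt17Aux
set_option linter.unusedSectionVars false

variable {G X : Type*} [CommGroup G] [Fintype G] [Fintype X] [MulAction G X]

lemma dual_equiv (G : Type*) [CommGroup G] [Fintype G] : Nonempty ((G →* ℂ) ≃ G) := by
  haveI : NeZero ((Monoid.exponent G : ℂ)) :=
    ⟨Nat.cast_ne_zero.mpr Monoid.exponent_ne_zero_of_finite⟩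
  obtain ⟨e⟩ := CommGroup.monoidHom_mulEquiv_of_hasEnoughRootsOfUnity G ℂ
  refine ⟨Equiv.trans ⟨MonoidHom.toHomUnits, fun ψ => (Units.coeHom ℂ).comp ψ, ?_, ?_⟩ e.toEquiv⟩
  · intro ψ; ext a; rfl
  · intro ψ; ext a; rfl

noncomputable instance : Fintype (G →* ℂ) := Fintype.ofEquiv G (dual_equiv G).some.symm

lemma card_dual (G : Type*) [CommGroup G] [Fintype G] :
    Fintype.card (G →* ℂ) = Fintype.card G := Fintype.card_congr (dual_equiv G).some

lemma exists_ne_one {γ : G} (hγ : γ ≠ 1) : ∃ ψ : G →* ℂ, ψ γ ≠ 1 := by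
  haveI : NeZero ((Monoid.exponent G : ℂ)) :=
    ⟨Nat.cast_ne_zero.mpr Monoid.exponent_ne_zero_of_finite⟩
  obtain ⟨φ, hφ⟩ := CommGroup.exists_apply_ne_one_of_hasEnoughRootsOfUnity G ℂ hγ
  exact ⟨(Units.coeHom ℂ).comp φ, fun h => hφ (Units.ext h)⟩

lemma sum_chars [DecidableEq G] (γ : G) :
    ∑ ψ : G →* ℂ, ψ γ = if γ = 1 then (Fintype.card G : ℂ) else 0 := by
  split_ifs with h
  · subst h
    simp only [map_one, Finset.sum_const, Finset.card_univ, nsmul_eq_mul, mul_one]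
    rw [card_dual]
  · obtain ⟨ψ₀, hψ₀⟩ := exists_ne_one h
    let ψ₁ : G →* ℂ := ψ₀.comp (invMonoidHom)
    have hinv : ∀ ψ : G →* ℂ, ψ₁ * (ψ₀ * ψ) = ψ := by
      intro ψ; ext a
      simp only [MonoidHom.mul_apply, MonoidHom.comp_apply, invMonoidHom_apply, ψ₁]
      rw [← mul_assoc, ← map_mul, inv_mul_cancel, map_one, one_mul]
    have hinv' : ∀ ψ : G →* ℂ, ψ₀ * (ψ₁ * ψ) = ψ := by
      intro ψ; ext a
      simp only [MonoidHom.mul_apply, MonoidHom.comp_apply, invMonoidHom_apply, ψ₁]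
      rw [← mul_assoc, ← map_mul, mul_inv_cancel, map_one, one_mul]
    let e : (G →* ℂ) ≃ (G →* ℂ) := ⟨fun ψ => ψ₀ * ψ, fun ψ => ψ₁ * ψ, hinv, hinv'⟩
    have he := Equiv.sum_comp e (fun ψ : G →* ℂ => ψ γ)
    simp only [e, Equiv.coe_fn_mk, MonoidHom.mul_apply] at he
    rw [← Finset.mul_sum] at he
    have hfac : (ψ₀ γ - 1) * ∑ ψ : G →* ℂ, ψ γ = 0 := by
      rw [sub_mul, he, one_mul, sub_self]
    rcases mul_eq_zero.mp hfac with h1 | h1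
    · exact absurd (by linear_combination h1) hψ₀
    · exact h1

lemma sum_char_mul_conj [DecidableEq G] (α β : G) :
    ∑ ψ : G →* ℂ, ψ α * (starRingEnd ℂ) (ψ β)
      = if α = β then (Fintype.card G : ℂ) else 0 := by
  have hterm : ∀ ψ : G →* ℂ, ψ α * (starRingEnd ℂ) (ψ β) = ψ (α * β⁻¹) := fun ψ => by
    rw [conj_apply, ← map_mul]
  simp only [hterm]
  rw [sum_chars]
  congr 1
  simp [mul_inv_eq_one]

end Stmt17Aux

namespace Stmt17Aux
set_option linter.unusedSectionVars false

variable {G X : Type*} [CommGroup G] [Fintype G] [Fintype X] [MulAction G X]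

lemma step_sum [DecidableEq G] (f : X → ℂ) (x : X) :
    ∑ ψ : G →* ℂ, (∑ α : G, ψ α * f (α⁻¹ • x)) *
        (starRingEnd ℂ) (∑ β : G, ψ β * f (β⁻¹ • x))
      = (Fintype.card G : ℂ) * ∑ α : G, f (α⁻¹ • x) * (starRingEnd ℂ) (f (α⁻¹ • x)) := by
  calc ∑ ψ : G →* ℂ, (∑ α : G, ψ α * f (α⁻¹ • x)) *
        (starRingEnd ℂ) (∑ β : G, ψ β * f (β⁻¹ • x))
      = ∑ α : G, ∑ β : G, (∑ ψ : G →* ℂ, ψ β * (starRingEnd ℂ) (ψ α)) *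
          (f (β⁻¹ • x) * (starRingEnd ℂ) (f (α⁻¹ • x))) := by
        simp only [map_sum, map_mul, Finset.sum_mul, Finset.mul_sum]
        rw [Finset.sum_comm]
        refine Finset.sum_congr rfl fun α _ => ?_
        rw [Finset.sum_comm]
        refine Finset.sum_congr rfl fun β _ => ?_
        exact Finset.sum_congr rfl fun ψ _ => by ring
    _ = ∑ α : G, (Fintype.card G : ℂ) * (f (α⁻¹ • x) * (starRingEnd ℂ) (f (α⁻¹ • x))) := by
        refine Finset.sum_congr rfl fun α _ => ?_
        simp only [sum_char_mul_conj, ite_mul, zero_mul]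
        rw [Finset.sum_ite_eq', if_pos (Finset.mem_univ α)]
    _ = (Fintype.card G : ℂ) * ∑ α : G, f (α⁻¹ • x) * (starRingEnd ℂ) (f (α⁻¹ • x)) := by
        rw [Finset.mul_sum]

lemma plancherel (f : X → ℂ) (hf : ∀ x : X, ‖f x‖ = 1) :
    ∑ ψ : G →* ℂ, ∑ x : X, Complex.normSq (P ψ f x) = (Fintype.card X : ℝ) := by
  classical
  have hfn : ∀ y : X, f y * (starRingEnd ℂ) (f y) = 1 := by
    intro y
    rw [Complex.mul_conj]
    rw [← Complex.sq_norm, hf]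
    norm_num
  have hm : ((Fintype.card G : ℂ)) ≠ 0 := Nat.cast_ne_zero.mpr (Fintype.card_ne_zero (α := G))
  have claim : ∀ x : X, ∑ ψ : G →* ℂ, Complex.normSq (P ψ f x) = 1 := by
    intro x
    have key : (↑(∑ ψ : G →* ℂ, Complex.normSq (P ψ f x)) : ℂ) = 1 := by
      push_cast [← Complex.mul_conj]
      calc ∑ ψ : G →* ℂ, P ψ f x * (starRingEnd ℂ) (P ψ f x)
          = (1 / (Fintype.card G : ℂ)) * ((starRingEnd ℂ) (1 / (Fintype.card G : ℂ))) *
            ∑ ψ : G →* ℂ, (∑ α : G, ψ α * f (α⁻¹ • x)) *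
              (starRingEnd ℂ) (∑ β : G, ψ β * f (β⁻¹ • x)) := by
            rw [Finset.mul_sum]
            refine Finset.sum_congr rfl fun ψ _ => ?_
            simp only [P, map_mul]
            ring
        _ = 1 := by
            rw [step_sum f x]
            simp only [hfn, Finset.sum_const, Finset.card_univ, nsmul_eq_mul, mul_one,
              map_div₀, map_one, map_natCast]
            field_simp
    exact_mod_cast key
  rw [Finset.sum_comm]
  simp [claim]

lemma dist_P (f : X → ℂ) (ψ : G →* ℂ) :
    ∑ x : X, Complex.normSq (f x - P ψ f x)
      = ∑ x : X, Complex.normSq (f x) - ∑ x : X, Complex.normSq (P ψ f x) := by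
  apply pyth
  have h1 := inner_P ψ f (P ψ f) (P_linear ψ f)
  calc ∑ x : X, (starRingEnd ℂ) (P ψ f x) * (f x - P ψ f x)
      = ∑ x : X, ((starRingEnd ℂ) (P ψ f x) * f x - (starRingEnd ℂ) (P ψ f x) * P ψ f x) := by
        refine Finset.sum_congr rfl fun x _ => by ring
    _ = 0 := by rw [Finset.sum_sub_distrib, h1, sub_self]

lemma dist_ge (f g : X → ℂ) (ψ : G →* ℂ) (hg : ∀ (α : G) (x : X), g (α • x) = ψ α * g x) :
    ∑ x : X, Complex.normSq (f x) - ∑ x : X, Complex.normSq (P ψ f x)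
      ≤ ∑ x : X, Complex.normSq (f x - g x) := by
  have hpg : ∀ (α : G) (x : X), P ψ f (α • x) - g (α • x) = ψ α * (P ψ f x - g x) := by
    intro α x; rw [P_linear, hg]; ring
  have h1 := inner_P ψ f (fun x => P ψ f x - g x) hpg
  have horth : ∑ x : X, (starRingEnd ℂ) (P ψ f x - g x) * ((f x - g x) - (P ψ f x - g x)) = 0 := by
    calc ∑ x : X, (starRingEnd ℂ) (P ψ f x - g x) * ((f x - g x) - (P ψ f x - g x))
        = ∑ x : X, ((starRingEnd ℂ) (P ψ f x - g x) * f x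
            - (starRingEnd ℂ) (P ψ f x - g x) * P ψ f x) := by
          refine Finset.sum_congr rfl fun x _ => by ring
      _ = 0 := by rw [Finset.sum_sub_distrib, h1, sub_self]
  have hp := pyth (X := X) (f := fun x => f x - g x) (g := fun x => P ψ f x - g x) horth
  have e1 : ∑ x : X, Complex.normSq ((f x - g x) - (P ψ f x - g x))
      = ∑ x : X, Complex.normSq (f x - P ψ f x) := by
    refine Finset.sum_congr rfl fun x _ => ?_
    congr 1; ring
  have e2 := dist_P f ψ
  have e3 : (0:ℝ) ≤ ∑ x : X, Complex.normSq (P ψ f x - g x) :=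
    Finset.sum_nonneg fun x _ => Complex.normSq_nonneg _
  linarith

end Stmt17Aux


/-- For a unitary f : X → T, the distance from f to the set of G-linear
functions is at most √((m−1)n/m); the bound is attained exactly when f is
bent, i.e. when all classical components of f have the same length. -/
theorem stmt17 {G X : Type*} [CommGroup G] [Fintype G] [Fintype X] [MulAction G X]
    (f : X → ℂ) (hf : ∀ x : X, ‖(f x)‖ = 1) :
    (∃ g : X → ℂ, (∃ ψ : G →* ℂ, ∀ (α : G) (x : X), g (α • x) = ψ α * g x) ∧
        ∑ x : X, ‖(f x - g x)‖ ^ 2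
          ≤ ((Fintype.card G : ℝ) - 1) * (Fintype.card X) / (Fintype.card G)) ∧
    ((∀ g : X → ℂ, (∃ ψ : G →* ℂ, ∀ (α : G) (x : X), g (α • x) = ψ α * g x) →
        ((Fintype.card G : ℝ) - 1) * (Fintype.card X) / (Fintype.card G)
          ≤ ∑ x : X, ‖(f x - g x)‖ ^ 2) ↔
      (∀ ψ φ : G →* ℂ,
        ∑ x : X, ‖((1 / (Fintype.card G : ℂ)) *
            ∑ α : G, ψ α * f (α⁻¹ • x))‖ ^ 2
          = ∑ x : X, ‖((1 / (Fintype.card G : ℂ)) *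
            ∑ α : G, φ α * f (α⁻¹ • x))‖ ^ 2)) := by
  classical
  open Stmt17Aux in
  simp only [Complex.sq_norm]
  simp only [show ∀ (ψ : G →* ℂ) (x : X),
      Complex.normSq ((1 / (Fintype.card G : ℂ)) * ∑ α : G, ψ α * f (α⁻¹ • x))
        = Complex.normSq (Stmt17Aux.P ψ f x) from fun ψ x => rfl]
  have hmR : ((Fintype.card G : ℝ)) ≠ 0 := Nat.cast_ne_zero.mpr (Fintype.card_ne_zero (α := G))
  have hfn : ∑ x : X, Complex.normSq (f x) = (Fintype.card X : ℝ) := by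
    have h1 : ∀ x : X, Complex.normSq (f x) = 1 := fun x => by
      rw [← Complex.sq_norm, hf]; norm_num
    simp [h1]
  have hplan := Stmt17Aux.plancherel (G := G) f hf
  have hcard := Stmt17Aux.card_dual G
  have hble : ((Fintype.card G : ℝ) - 1) * (Fintype.card X) / (Fintype.card G)
      = (Fintype.card X : ℝ) - (Fintype.card X : ℝ) / (Fintype.card G) := by
    field_simp
  have hmn : (Fintype.card G : ℝ) * ((Fintype.card X : ℝ) / (Fintype.card G)) = Fintype.card X := by
    field_simp
  constructor
  · -- existence
    have hex : ∃ ψ : G →* ℂ, (Fintype.card X : ℝ) / (Fintype.card G)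
        ≤ ∑ x : X, Complex.normSq (Stmt17Aux.P ψ f x) := by
      by_contra hc
      push_neg at hc
      have hne : (Finset.univ : Finset (G →* ℂ)).Nonempty := ⟨1, Finset.mem_univ 1⟩
      have hlt := Finset.sum_lt_sum_of_nonempty hne (fun ψ _ => hc ψ)
      rw [hplan, Finset.sum_const, Finset.card_univ, hcard, nsmul_eq_mul, hmn] at hlt
      exact lt_irrefl _ hlt
    obtain ⟨ψ₀, hψ₀⟩ := hex
    refine ⟨Stmt17Aux.P ψ₀ f, ⟨ψ₀, Stmt17Aux.P_linear ψ₀ f⟩, ?_⟩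
    rw [Stmt17Aux.dist_P f ψ₀, hfn, hble]
    linarith
  · constructor
    · intro H ψ φ
      have hup : ∀ χ : G →* ℂ, ∑ x : X, Complex.normSq (Stmt17Aux.P χ f x)
          ≤ (Fintype.card X : ℝ) / (Fintype.card G) := by
        intro χ
        have h1 := H (Stmt17Aux.P χ f) ⟨χ, Stmt17Aux.P_linear χ f⟩
        rw [Stmt17Aux.dist_P f χ, hfn, hble] at h1
        linarith
      have hall : ∀ χ : G →* ℂ, ∑ x : X, Complex.normSq (Stmt17Aux.P χ f x)
          = (Fintype.card X : ℝ) / (Fintype.card G) := by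
        intro χ
        by_contra hne
        have hlt := lt_of_le_of_ne (hup χ) hne
        have hsum := Finset.sum_lt_sum (fun i _ => hup i) ⟨χ, Finset.mem_univ χ, hlt⟩
        rw [hplan, Finset.sum_const, Finset.card_univ, hcard, nsmul_eq_mul, hmn] at hsum
        exact lt_irrefl _ hsum
      rw [hall ψ, hall φ]
    · rintro Heq g ⟨ψ, hg⟩
      have hall : ∑ x : X, Complex.normSq (Stmt17Aux.P ψ f x)
          = (Fintype.card X : ℝ) / (Fintype.card G) := by
        have h1 : ∀ φ' : G →* ℂ, ∑ x : X, Complex.normSq (Stmt17Aux.P φ' f x)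
            = ∑ x : X, Complex.normSq (Stmt17Aux.P ψ f x) := fun φ' => Heq φ' ψ
        have h2 : (Fintype.card X : ℝ)
            = (Fintype.card G : ℝ) * ∑ x : X, Complex.normSq (Stmt17Aux.P ψ f x) := by
          rw [← hplan]
          simp only [h1]
          rw [Finset.sum_const, Finset.card_univ, hcard, nsmul_eq_mul]
        rw [h2]
        field_simp
      have h1 := Stmt17Aux.dist_ge f g ψ hg
      rw [hfn, hall] at h1
      rw [hble]
      linarith
end

section
/- A function f : X → H from a finite G-set X to a finite abelian group H is G-perfect nonlinear (for every non-identity α ∈ G, the derivative x ↦ f(αx)f(x)⁻¹ takes each value of H exactly |X|/|H| times) if and only if for every nontrivial irreducible character ξ of H, the composition ξ∘f : X → ℂ has totally balanced derivatives, i.e., Σ_{x∈X} ξ(f(αx)f(x)⁻¹) = 0 for all α ≠ 1. -/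
open Finset

/-- The equivalence between monoid homs `H →* ℂ` and additive characters of `Additive H`. -/
def mhEquiv (H : Type*) [CommGroup H] : AddChar (Additive H) ℂ ≃ (H →* ℂ) where
  toFun ψ :=
    { toFun := fun h => ψ (Additive.ofMul h)
      map_one' := ψ.map_zero_eq_one
      map_mul' := fun a b => ψ.map_add_eq_mul a b }
  invFun ξ :=
    { toFun := fun a => ξ a.toMul
      map_zero_eq_one' := ξ.map_one
      map_add_eq_mul' := fun a b => ξ.map_mul a b }
  left_inv ψ := rfl
  right_inv ξ := rfl

noncomputable instance mhFintype (H : Type*) [CommGroup H] [Fintype H] :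
    Fintype (H →* ℂ) := Fintype.ofEquiv _ (mhEquiv H)

/-- Orthogonality: summing all characters at a point. -/
lemma sum_mh {H : Type*} [CommGroup H] [Fintype H] [DecidableEq H] (h : H) :
    ∑ ξ : H →* ℂ, ξ h = if h = 1 then (Fintype.card H : ℂ) else 0 := by
  classical
  rw [← Equiv.sum_comp (mhEquiv H) (fun ξ : H →* ℂ => ξ h)]
  have : ∀ ψ : AddChar (Additive H) ℂ, (mhEquiv H ψ) h = ψ (Additive.ofMul h) := fun _ => rfl
  simp_rw [this]
  rw [AddChar.sum_apply_eq_ite]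
  have hcard : Fintype.card (Additive H) = Fintype.card H :=
    Fintype.card_congr Additive.toMul
  have : (Additive.ofMul h = 0) ↔ h = 1 := Iff.rfl
  simp [this, hcard]

/-- A nontrivial character sums to zero over the group. -/
lemma sum_over_group_eq_zero {H : Type*} [CommGroup H] [Fintype H]
    (ξ : H →* ℂ) (hξ : ξ ≠ 1) : ∑ h : H, ξ h = 0 := by
  obtain ⟨h₀, hh₀⟩ : ∃ h₀ : H, ξ h₀ ≠ 1 := by
    by_contra hc
    push_neg at hc
    exact hξ (MonoidHom.ext fun h => by simp [hc h])
  have key : ξ h₀ * ∑ h : H, ξ h = ∑ h : H, ξ h := by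
    rw [Finset.mul_sum]
    simp_rw [← map_mul]
    exact Fintype.sum_equiv (Equiv.mulLeft h₀) _ _ fun h => rfl
  have : (ξ h₀ - 1) * ∑ h : H, ξ h = 0 := by ring_nf; linear_combination key
  rcases mul_eq_zero.1 this with h | h
  · exact absurd (by linear_combination h) hh₀
  · exact h

/-- f : X → H is G-perfect nonlinear iff for every nontrivial irreducible
character ξ of H the composition ξ∘f has totally balanced derivatives. -/
theorem stmt19 {G X H : Type*} [CommGroup G] [Fintype G] [Fintype X] [MulAction G X]
    [CommGroup H] [Fintype H] [DecidableEq H]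
    (f : X → H) (hdvd : Fintype.card H ∣ Fintype.card X) :
    (∀ α : G, α ≠ 1 → ∀ h : H,
        (Finset.univ.filter (fun x : X => f (α • x) * (f x)⁻¹ = h)).card
          = Fintype.card X / Fintype.card H) ↔
      (∀ ξ : H →* ℂ, ξ ≠ 1 → ∀ α : G, α ≠ 1 →
        ∑ x : X, ξ (f (α • x) * (f x)⁻¹) = 0) := by
  classical
  constructor
  · intro hpn ξ hξ α hα
    set g : X → H := fun x => f (α • x) * (f x)⁻¹ with hg
    calc ∑ x : X, ξ (g x)
        = ∑ h : H, ∑ x ∈ Finset.univ.filter (fun x : X => g x = h), ξ (g x) := by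
          rw [Finset.sum_fiberwise]
      _ = ∑ h : H, ((Finset.univ.filter (fun x : X => g x = h)).card : ℂ) * ξ h := by
          refine Finset.sum_congr rfl fun h _ => ?_
          rw [Finset.sum_congr rfl fun x hx => by
            rw [(Finset.mem_filter.1 hx).2]]
          simp [mul_comm]
      _ = ∑ h : H, ((Fintype.card X / Fintype.card H : ℕ) : ℂ) * ξ h := by
          refine Finset.sum_congr rfl fun h _ => ?_
          rw [hpn α hα h]
      _ = ((Fintype.card X / Fintype.card H : ℕ) : ℂ) * ∑ h : H, ξ h := by
          rw [Finset.mul_sum]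
      _ = 0 := by rw [sum_over_group_eq_zero ξ hξ, mul_zero]
  · intro hbal α hα h₀
    set g : X → H := fun x => f (α • x) * (f x)⁻¹ with hg
    have key : ∑ ξ : H →* ℂ, ξ h₀⁻¹ * ∑ x : X, ξ (g x)
        = (Fintype.card H : ℂ) * ((Finset.univ.filter (fun x : X => g x = h₀)).card : ℂ) := by
      calc ∑ ξ : H →* ℂ, ξ h₀⁻¹ * ∑ x : X, ξ (g x)
          = ∑ ξ : H →* ℂ, ∑ x : X, ξ (g x * h₀⁻¹) := by
            refine Finset.sum_congr rfl fun ξ _ => ?_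
            rw [Finset.mul_sum]
            exact Finset.sum_congr rfl fun x _ => by
              rw [← map_mul, mul_comm h₀⁻¹ (g x)]
        _ = ∑ x : X, ∑ ξ : H →* ℂ, ξ (g x * h₀⁻¹) := Finset.sum_comm
        _ = ∑ x : X, if g x * h₀⁻¹ = 1 then (Fintype.card H : ℂ) else 0 := by
            exact Finset.sum_congr rfl fun x _ => sum_mh _
        _ = ∑ x : X, if g x = h₀ then (Fintype.card H : ℂ) else 0 := by
            refine Finset.sum_congr rfl fun x _ => ?_
            congr 1
            simp [mul_inv_eq_one]
        _ = (Fintype.card H : ℂ) * ((Finset.univ.filter (fun x : X => g x = h₀)).card : ℂ) := by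
            rw [Finset.sum_ite, Finset.sum_const_zero, add_zero, Finset.sum_const,
              nsmul_eq_mul, mul_comm]
    have key2 : ∑ ξ : H →* ℂ, ξ h₀⁻¹ * ∑ x : X, ξ (g x) = (Fintype.card X : ℂ) := by
      rw [Finset.sum_eq_single (1 : H →* ℂ)]
      · simp
      · intro ξ _ hξ
        rw [hbal ξ hξ α hα, mul_zero]
      · intro h; exact absurd (Finset.mem_univ _) h
    have hnat : Fintype.card H * (Finset.univ.filter (fun x : X => g x = h₀)).card
        = Fintype.card X := by
      have := key.symm.trans key2
      exact_mod_cast this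
    have hHpos : 0 < Fintype.card H := Fintype.card_pos
    exact (Nat.div_eq_of_eq_mul_left hHpos (by rw [← hnat]; ring)).symm
end
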